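/- arXiv:2401.14406 — 4 statements merged into one kernel-verified Lean document; each statement's English description precedes it below -/
import Mathlib

section
/- The power fractional derivative admits the series representation ${}^pD_{a,\omega}^{\alpha,\beta} f(t) = \frac{1}{\chi(\alpha)} \sum_{n=0}^{\infty} (-\mu_\alpha \ln p)^n \, {}^{RL}I_{a,\omega}^{\beta n + 1}\left(\frac{(\omega f)'}{\omega}\right)(t)$ for every $t \in [a,b]$, where the series converges locally uniformly in $t$. -/
open MeasureTheory

/-- The power Mittag–Leffler function (real version). -/
noncomputable def pE (p β s : ℝ) : ℝ :=
  ∑' n : ℕ, (s * Real.log p) ^ n / Real.Gamma (β * n + 1)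

/-- Weighted Riemann–Liouville fractional integral of order `β`. -/
noncomputable def RLI (a : ℝ) (ω : ℝ → ℝ) (β : ℝ) (f : ℝ → ℝ) (t : ℝ) : ℝ :=
  (1 / (Real.Gamma β * ω t)) * ∫ τ in a..t, (t - τ) ^ (β - 1) * (ω τ * f τ)

/-- The power fractional derivative (Caputo sense) with weight `ω`,
normalization value `Nα`, so `χ(α) = (1-α)/Nα` and `μ_α = α/(1-α)`. -/
noncomputable def pD (a : ℝ) (ω : ℝ → ℝ) (α β p Nα : ℝ) (f : ℝ → ℝ) (t : ℝ) : ℝ :=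
  (1 / (((1 - α) / Nα) * ω t)) *
    ∫ τ in a..t, pE p β (-(α / (1 - α)) * (t - τ) ^ β) * deriv (fun s => ω s * f s) τ

/-- The power fractional integral, `φ(α) = α/Nα`. -/
noncomputable def pI (a : ℝ) (ω : ℝ → ℝ) (α β p Nα : ℝ) (f : ℝ → ℝ) (t : ℝ) : ℝ :=
  ((1 - α) / Nα) * f t + Real.log p * (α / Nα) * RLI a ω β f t



lemma nat_pow_le_factorial (q m : ℕ) (hq : 1 ≤ q) : q ^ m ≤ q ^ q * m.factorial := by
  induction m with
  | zero => simpa using Nat.one_le_pow _ _ hq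
  | succ m ih =>
    rcases le_or_gt (m + 1) q with h | h
    · calc q ^ (m + 1) ≤ q ^ q := Nat.pow_le_pow_right hq h
        _ ≤ q ^ q * (m+1).factorial := Nat.le_mul_of_pos_right _ (m+1).factorial_pos
    · calc q ^ (m + 1) = q ^ m * q := by ring
        _ ≤ q ^ q * m.factorial * (m + 1) := Nat.mul_le_mul ih h.le
        _ = q ^ q * (m+1).factorial := by rw [Nat.factorial_succ]; ring

lemma summable_pow_div_gamma (β : ℝ) (hβ : 0 < β) (K : ℝ) (hK : 0 ≤ K) :
    Summable (fun n : ℕ => K ^ n / Real.Gamma (β * n + 1)) := by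
  set q : ℕ := max 1 ⌈(2 * K + 2) ^ β⁻¹⌉₊ with hqdef
  have hq1 : 1 ≤ q := le_max_left _ _
  have hq1' : (1 : ℝ) ≤ q := by exact_mod_cast hq1
  have hqβ : 2 * K + 2 ≤ (q : ℝ) ^ β := by
    have h0 : (0:ℝ) ≤ 2 * K + 2 := by linarith
    have h1 : (2 * K + 2) ^ β⁻¹ ≤ (q : ℝ) := by
      calc (2 * K + 2) ^ β⁻¹ ≤ (⌈(2 * K + 2) ^ β⁻¹⌉₊ : ℝ) := Nat.le_ceil _
        _ ≤ q := by exact_mod_cast Nat.le_max_right 1 _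
    calc 2 * K + 2 = ((2 * K + 2) ^ β⁻¹) ^ β := (Real.rpow_inv_rpow h0 hβ.ne').symm
      _ ≤ (q : ℝ) ^ β := Real.rpow_le_rpow (Real.rpow_nonneg h0 _) h1 hβ.le
  have hqβpos : (0:ℝ) < (q:ℝ) ^ β := by linarith
  -- main bound: for n with 1 ≤ β * n
  have hbound : ∀ n : ℕ, 1 ≤ β * n →
      K ^ n / Real.Gamma (β * n + 1) ≤ ((q:ℝ) ^ (q+1)) * (K / ((q:ℝ) ^ β)) ^ n := by
    intro n hn
    set m : ℕ := ⌊β * (n:ℝ)⌋₊ with hm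
    have hβn0 : (0:ℝ) ≤ β * n := by linarith
    have hm1 : 1 ≤ m := Nat.le_floor (by exact_mod_cast hn)
    have hmle : (m : ℝ) ≤ β * n := Nat.floor_le hβn0
    have hmgt : β * (n:ℝ) < m + 1 := Nat.lt_floor_add_one _
    -- Gamma lower bound
    have hgam : (m.factorial : ℝ) ≤ Real.Gamma (β * n + 1) := by
      have h2 : (2:ℝ) ≤ (m:ℝ) + 1 := by exact_mod_cast Nat.succ_le_succ hm1
      have := Real.Gamma_strictMonoOn_Ici.monotoneOn (Set.mem_Ici.2 h2)
        (Set.mem_Ici.2 (by linarith : (2:ℝ) ≤ β * n + 1)) (by linarith)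
      rwa [Real.Gamma_nat_eq_factorial] at this
    -- factorial lower bound
    have hfact : (q:ℝ) ^ (β * n) / (q:ℝ) ^ (q+1) ≤ (m.factorial : ℝ) := by
      have h1 : (q:ℝ) ^ (β * n) ≤ (q:ℝ) ^ ((m:ℝ) + 1) :=
        Real.rpow_le_rpow_of_exponent_le hq1' hmgt.le
      have h2 : (q:ℝ) ^ ((m:ℝ) + 1) = (q:ℝ) ^ (m + 1 : ℕ) := by
        rw [← Real.rpow_natCast (q:ℝ) (m+1)]; push_cast; ring_nf
      have h3 : (q:ℕ) ^ (m+1) ≤ q ^ (q+1) * m.factorial := by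
        calc q ^ (m+1) = q ^ m * q := by ring
          _ ≤ (q ^ q * m.factorial) * q := Nat.mul_le_mul_right _ (nat_pow_le_factorial q m hq1)
          _ = q ^ (q+1) * m.factorial := by ring
      rw [div_le_iff₀ (by positivity)]
      calc (q:ℝ) ^ (β * n) ≤ (q:ℝ) ^ (m+1 : ℕ) := h2 ▸ h1
        _ ≤ (q:ℝ) ^ (q+1) * m.factorial := by exact_mod_cast h3
        _ = (m.factorial:ℝ) * (q:ℝ)^(q+1) := by ring
    have hgampos : 0 < Real.Gamma (β * n + 1) := Real.Gamma_pos_of_pos (by linarith)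
    have hK1 : K ^ n / Real.Gamma (β * n + 1) ≤ K ^ n / ((q:ℝ) ^ (β * n) / (q:ℝ) ^ (q+1)) := by
      apply div_le_div_of_nonneg_left (pow_nonneg hK n) _ (le_trans hfact hgam)
      · positivity
    calc K ^ n / Real.Gamma (β * n + 1) ≤ K ^ n / ((q:ℝ) ^ (β * n) / (q:ℝ) ^ (q+1)) := hK1
      _ = ((q:ℝ) ^ (q+1)) * (K ^ n / (q:ℝ) ^ (β * n)) := by rw [div_div_eq_mul_div]; ring
      _ = ((q:ℝ) ^ (q+1)) * (K / ((q:ℝ) ^ β)) ^ n := by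
          rw [div_pow, ← Real.rpow_natCast ((q:ℝ)^β) n, ← Real.rpow_mul (by positivity)]
      _ ≤ ((q:ℝ) ^ (q+1)) * (K / ((q:ℝ) ^ β)) ^ n := le_rfl
  -- geometric comparison
  have hr : K / ((q:ℝ) ^ β) ≤ 1/2 := by
    rw [div_le_iff₀ hqβpos]; nlinarith
  have hr0 : 0 ≤ K / ((q:ℝ) ^ β) := div_nonneg hK hqβpos.le
  set N : ℕ := ⌈β⁻¹⌉₊ with hN
  rw [← summable_nat_add_iff N]
  apply Summable.of_nonneg_of_le
  · intro n
    positivity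
  · intro n
    have h1 : 1 ≤ β * ((n + N : ℕ) : ℝ) := by
      have : β⁻¹ ≤ (N:ℝ) := Nat.le_ceil _
      have hN' : (N:ℝ) ≤ ((n + N : ℕ):ℝ) := by push_cast; linarith [Nat.cast_nonneg (α := ℝ) n]
      calc (1:ℝ) = β * β⁻¹ := by field_simp
        _ ≤ β * N := by nlinarith
        _ ≤ β * ((n + N : ℕ):ℝ) := by nlinarith
    calc K ^ (n + N) / Real.Gamma (β * (n + N : ℕ) + 1)
        ≤ ((q:ℝ) ^ (q+1)) * (K / ((q:ℝ) ^ β)) ^ (n + N) := hbound _ h1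
      _ ≤ ((q:ℝ) ^ (q+1)) * (1/2) ^ (n + N) := by
          apply mul_le_mul_of_nonneg_left (pow_le_pow_left₀ hr0 hr _) (by positivity)
      _ = (((q:ℝ) ^ (q+1)) * (1/2) ^ N) * (1/2) ^ n := by rw [pow_add]; ring
  · exact (summable_geometric_of_lt_one (by norm_num) (by norm_num)).mul_left _

lemma g_integrable (a b : ℝ) (hab : a < b) (ω f : ℝ → ℝ)
    (hω : ContDiffOn ℝ 1 ω (Set.Icc a b)) (hωpos : ∀ t ∈ Set.Icc a b, 0 < ω t)
    (hf : MemLp f 2 (volume.restrict (Set.Ioo a b)))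
    (hf' : MemLp (deriv f) 2 (volume.restrict (Set.Ioo a b))) :
    IntegrableOn (deriv (fun s => ω s * f s)) (Set.Ioo a b) := by
  haveI : IsFiniteMeasure (volume.restrict (Set.Ioo a b)) := by
    constructor
    rw [Measure.restrict_apply_univ, Real.volume_Ioo]
    exact ENNReal.ofReal_lt_top
  have hfInt : Integrable f (volume.restrict (Set.Ioo a b)) :=
    hf.integrable (by norm_num)
  have hf'Int : Integrable (deriv f) (volume.restrict (Set.Ioo a b)) :=
    hf'.integrable (by norm_num)
  have hωcont : ContinuousOn ω (Set.Icc a b) := hω.continuousOn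
  obtain ⟨Cω, hCω⟩ := isCompact_Icc.exists_bound_of_continuousOn hωcont
  have hud : UniqueDiffOn ℝ (Set.Icc a b) := uniqueDiffOn_Icc hab
  have hdw : ContinuousOn (derivWithin ω (Set.Icc a b)) (Set.Icc a b) :=
    hω.continuousOn_derivWithin hud le_rfl
  obtain ⟨Cω', hCω'⟩ := isCompact_Icc.exists_bound_of_continuousOn hdw
  have hCωnn : 0 ≤ Cω := le_trans (norm_nonneg _) (hCω a (Set.left_mem_Icc.2 hab.le))
  have hCω'nn : 0 ≤ Cω' := le_trans (norm_nonneg _) (hCω' a (Set.left_mem_Icc.2 hab.le))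
  have hbd : ∀ τ ∈ Set.Ioo a b,
      ‖deriv (fun s => ω s * f s) τ‖ ≤ Cω' * ‖f τ‖ + Cω * ‖deriv f τ‖ := by
    intro τ hτ
    have hτI : τ ∈ Set.Icc a b := Set.Ioo_subset_Icc_self hτ
    have hnhds : Set.Icc a b ∈ nhds τ := Icc_mem_nhds hτ.1 hτ.2
    have hωd : DifferentiableAt ℝ ω τ :=
      ((hω.differentiableOn one_ne_zero) τ hτI).differentiableAt hnhds
    have hωne : ω τ ≠ 0 := (hωpos τ hτI).ne'
    by_cases hdiff : DifferentiableAt ℝ (fun s => ω s * f s) τ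
    · have hev : ∀ᶠ s in nhds τ, ω s ≠ 0 := hωd.continuousAt.eventually_ne hωne
      have heq : (fun s => ω s * f s / ω s) =ᶠ[nhds τ] f := by
        filter_upwards [hev] with s hs
        field_simp
      have hfd : DifferentiableAt ℝ f τ :=
        (hdiff.div hωd hωne).congr_of_eventuallyEq heq.symm
      rw [deriv_fun_mul hωd hfd]
      have h1 : ‖deriv ω τ‖ ≤ Cω' := by
        rw [← derivWithin_of_mem_nhds hnhds]; exact hCω' τ hτI
      have h2 : ‖ω τ‖ ≤ Cω := hCω τ hτI
      calc ‖deriv ω τ * f τ + ω τ * deriv f τ‖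
          ≤ ‖deriv ω τ * f τ‖ + ‖ω τ * deriv f τ‖ := norm_add_le _ _
        _ = ‖deriv ω τ‖ * ‖f τ‖ + ‖ω τ‖ * ‖deriv f τ‖ := by rw [norm_mul, norm_mul]
        _ ≤ Cω' * ‖f τ‖ + Cω * ‖deriv f τ‖ := by
            gcongr
    · rw [deriv_zero_of_not_differentiableAt hdiff]
      simp only [norm_zero]
      positivity
  apply Integrable.mono' ((hfInt.norm.const_mul Cω').add (hf'Int.norm.const_mul Cω))
  · exact (measurable_deriv _).aestronglyMeasurable
  · rw [ae_restrict_iff' measurableSet_Ioo]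
    filter_upwards with τ hτ
    simpa using hbd τ hτ

/-- Series representation of the power fractional derivative, together with
locally uniform convergence of the partial sums on `[a,b]`. -/
theorem pD_series_repr (a b α β p Nα : ℝ) (hab : a ≤ b) (hα0 : 0 ≤ α) (hα1 : α < 1)
    (hβ : 0 < β) (hp : 0 < p) (hN : 0 < Nα) (ω f : ℝ → ℝ)
    (hω : ContDiffOn ℝ 1 ω (Set.Icc a b)) (hωpos : ∀ t ∈ Set.Icc a b, 0 < ω t)
    (hf : MemLp f 2 (MeasureTheory.volume.restrict (Set.Ioo a b)))
    (hf' : MemLp (deriv f) 2 (MeasureTheory.volume.restrict (Set.Ioo a b))) :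
    (∀ t ∈ Set.Icc a b,
      pD a ω α β p Nα f t =
        (Nα / (1 - α)) * ∑' n : ℕ, (-(α / (1 - α)) * Real.log p) ^ n *
          RLI a ω (β * n + 1) (fun s => deriv (fun u => ω u * f u) s / ω s) t) ∧
    TendstoLocallyUniformlyOn
      (fun (N : ℕ) (t : ℝ) =>
        (Nα / (1 - α)) * ∑ n ∈ Finset.range N, (-(α / (1 - α)) * Real.log p) ^ n *
          RLI a ω (β * n + 1) (fun s => deriv (fun u => ω u * f u) s / ω s) t)
      (pD a ω α β p Nα f) Filter.atTop (Set.Icc a b) := by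
  
  set c : ℝ := -(α / (1 - α)) * Real.log p with hc
  set g : ℝ → ℝ := deriv (fun s => ω s * f s) with hg
  have h1α : (0:ℝ) < 1 - α := by linarith
  have hgInt : IntegrableOn g (Set.Ioo a b) := by
    rcases lt_or_eq_of_le hab with h | h
    · exact g_integrable a b h ω f hω hωpos hf hf'
    · rw [← h, Set.Ioo_self]; exact integrableOn_empty
  set Iab : ℝ := ∫ τ in Set.Ioo a b, ‖g τ‖ with hIabdef
  have hIab0 : 0 ≤ Iab := integral_nonneg fun τ => norm_nonneg _
  obtain ⟨x0, hx0m, hx0'⟩ :=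
    isCompact_Icc.exists_isMinOn (Set.nonempty_Icc.2 hab) hω.continuousOn
  have hx0 : ∀ t ∈ Set.Icc a b, ω x0 ≤ ω t := fun t ht => hx0' ht
  set w0 : ℝ := ω x0 with hw0def
  have hw0 : 0 < w0 := hωpos x0 hx0m
  have hba : (0:ℝ) ≤ b - a := by linarith
  set K : ℝ := |c| * (b - a) ^ β with hKdef
  have hK0 : 0 ≤ K := mul_nonneg (abs_nonneg _) (Real.rpow_nonneg hba β)
  have hsum : Summable (fun n : ℕ => K ^ n / Real.Gamma (β * n + 1)) :=
    summable_pow_div_gamma β hβ K hK0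
  have hΓpos : ∀ n : ℕ, 0 < Real.Gamma (β * n + 1) := fun n =>
    Real.Gamma_pos_of_pos (by positivity)
  have hIoct : ∀ t ∈ Set.Icc a b, IntegrableOn g (Set.Ioc a t) := fun t ht =>
    (hgInt.mono_set (Set.Ioo_subset_Ioo_right ht.2)).congr_set_ae Ioo_ae_eq_Ioc.symm
  have hIocle : ∀ t ∈ Set.Icc a b, (∫ τ in Set.Ioc a t, ‖g τ‖) ≤ Iab := by
    intro t ht
    rw [← setIntegral_congr_set Ioo_ae_eq_Ioc]
    exact setIntegral_mono_set hgInt.norm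
      (Filter.Eventually.of_forall fun τ => norm_nonneg _)
      (HasSubset.Subset.eventuallyLE fun τ hτ => ⟨hτ.1, hτ.2.trans_le ht.2⟩)
  have hker : ∀ t ∈ Set.Icc a b, ∀ n : ℕ, ∀ τ ∈ Set.Ioc a t,
      ‖(t - τ) ^ (β * (n:ℝ))‖ ≤ ((b - a) ^ β) ^ n := by
    intro t ht n τ hτ
    have h1 : (0:ℝ) ≤ t - τ := by linarith [hτ.2]
    have h2 : t - τ ≤ b - a := by have := hτ.1; have := ht.2; linarith
    rw [Real.norm_of_nonneg (Real.rpow_nonneg h1 _)]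
    calc (t - τ) ^ (β * (n:ℝ)) = ((t - τ) ^ β) ^ n := by
          rw [Real.rpow_mul h1, Real.rpow_natCast]
      _ ≤ ((b - a) ^ β) ^ n :=
          pow_le_pow_left₀ (Real.rpow_nonneg h1 β) (Real.rpow_le_rpow h1 h2 hβ.le) n
  set J : ℕ → ℝ → ℝ := fun n t => ∫ τ in Set.Ioc a t, (t - τ) ^ (β * (n:ℝ)) * g τ with hJdef
  have hFint : ∀ t ∈ Set.Icc a b, ∀ n : ℕ,
      IntegrableOn (fun τ => (t - τ) ^ (β * (n:ℝ)) * g τ) (Set.Ioc a t) := by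
    intro t ht n
    apply Integrable.bdd_mul (c := ((b - a) ^ β) ^ n) (hIoct t ht)
    · exact ((continuous_const.sub continuous_id).rpow_const
        (fun x => Or.inr (by positivity))).aestronglyMeasurable
    · rw [ae_restrict_iff' measurableSet_Ioc]
      filter_upwards with τ hτ
      exact hker t ht n τ hτ
  have hJbound : ∀ t ∈ Set.Icc a b, ∀ n : ℕ, ‖J n t‖ ≤ ((b - a) ^ β) ^ n * Iab := by
    intro t ht n
    calc ‖J n t‖ ≤ ∫ τ in Set.Ioc a t, ((b - a) ^ β) ^ n * ‖g τ‖ := by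
          apply norm_integral_le_of_norm_le ((hIoct t ht).norm.const_mul _)
          rw [ae_restrict_iff' measurableSet_Ioc]
          filter_upwards with τ hτ
          rw [norm_mul]
          exact mul_le_mul_of_nonneg_right (hker t ht n τ hτ) (norm_nonneg _)
      _ = ((b - a) ^ β) ^ n * ∫ τ in Set.Ioc a t, ‖g τ‖ := integral_const_mul _ _
      _ ≤ ((b - a) ^ β) ^ n * Iab := by
          have : (0:ℝ) ≤ ((b - a) ^ β) ^ n := by positivity
          exact mul_le_mul_of_nonneg_left (hIocle t ht) this
  have key : ∀ t ∈ Set.Icc a b,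
      (∫ τ in a..t, pE p β (-(α / (1 - α)) * (t - τ) ^ β) * g τ) =
      ∑' n : ℕ, (c ^ n / Real.Gamma (β * n + 1)) * J n t := by
    intro t ht
    rw [intervalIntegral.integral_of_le ht.1]
    have hptwise : Set.EqOn (fun τ => pE p β (-(α / (1 - α)) * (t - τ) ^ β) * g τ)
        (fun τ => ∑' n : ℕ,
          (c ^ n / Real.Gamma (β * n + 1)) * ((t - τ) ^ (β * (n:ℝ)) * g τ)) (Set.Ioc a t) := by
      intro τ hτ
      have h1 : (0:ℝ) ≤ t - τ := by linarith [hτ.2]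
      simp only [pE]
      rw [← tsum_mul_right]
      apply tsum_congr
      intro n
      have hbase : -(α / (1 - α)) * (t - τ) ^ β * Real.log p = c * (t - τ) ^ β := by
        rw [hc]; ring
      have hpow : (-(α / (1 - α)) * (t - τ) ^ β * Real.log p) ^ n
          = c ^ n * (t - τ) ^ (β * (n:ℝ)) := by
        rw [hbase, mul_pow, Real.rpow_mul h1, Real.rpow_natCast]
      rw [hpow]; ring
    rw [setIntegral_congr_fun measurableSet_Ioc hptwise]
    rw [← integral_tsum_of_summable_integral_norm]
    · exact tsum_congr fun n => integral_const_mul _ _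
    · exact fun n => ((hFint t ht n).const_mul _)
    · apply Summable.of_nonneg_of_le
        (fun n => integral_nonneg fun τ => norm_nonneg _) ?_ (hsum.mul_right Iab)
      intro n
      have hcoef : ‖c ^ n / Real.Gamma (β * n + 1)‖ = |c| ^ n / Real.Gamma (β * n + 1) := by
        rw [Real.norm_eq_abs, abs_div, abs_pow, abs_of_pos (hΓpos n)]
      calc (∫ τ in Set.Ioc a t,
              ‖(c ^ n / Real.Gamma (β * n + 1)) * ((t - τ) ^ (β * (n:ℝ)) * g τ)‖)
          ≤ ∫ τ in Set.Ioc a t,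
              (|c| ^ n / Real.Gamma (β * n + 1)) * (((b - a) ^ β) ^ n * ‖g τ‖) := by
            apply integral_mono_ae ((hFint t ht n).const_mul _).norm
              (((hIoct t ht).norm.const_mul _).const_mul _)
            rw [Filter.EventuallyLE, ae_restrict_iff' measurableSet_Ioc]
            filter_upwards with τ hτ
            rw [norm_mul, norm_mul, hcoef]
            apply mul_le_mul_of_nonneg_left _ (by positivity)
            exact mul_le_mul_of_nonneg_right (hker t ht n τ hτ) (norm_nonneg _)
        _ = (|c| ^ n / Real.Gamma (β * n + 1)) *
              (((b - a) ^ β) ^ n * ∫ τ in Set.Ioc a t, ‖g τ‖) := by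
            rw [integral_const_mul, integral_const_mul]
        _ ≤ K ^ n / Real.Gamma (β * n + 1) * Iab := by
            rw [hKdef, mul_pow]
            have h2 : (0:ℝ) ≤ |c| ^ n / Real.Gamma (β * n + 1) := by positivity
            have h3 := mul_le_mul_of_nonneg_left (hIocle t ht)
              (by positivity : (0:ℝ) ≤ ((b - a) ^ β) ^ n)
            calc (|c| ^ n / Real.Gamma (β * n + 1)) *
                  (((b - a) ^ β) ^ n * ∫ τ in Set.Ioc a t, ‖g τ‖)
                ≤ (|c| ^ n / Real.Gamma (β * n + 1)) * (((b - a) ^ β) ^ n * Iab) :=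
                  mul_le_mul_of_nonneg_left h3 h2
              _ = |c| ^ n * ((b - a) ^ β) ^ n / Real.Gamma (β * n + 1) * Iab := by ring
  have hRLI : ∀ t ∈ Set.Icc a b, ∀ n : ℕ,
      RLI a ω (β * n + 1) (fun s => g s / ω s) t
        = 1 / (Real.Gamma (β * n + 1) * ω t) * J n t := by
    intro t ht n
    simp only [RLI]
    congr 1
    have hcg : Set.EqOn (fun τ => (t - τ) ^ (β * (n:ℝ) + 1 - 1) * (ω τ * (g τ / ω τ)))
        (fun τ => (t - τ) ^ (β * (n:ℝ)) * g τ) (Set.uIcc a t) := by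
      intro τ hτ
      rw [Set.uIcc_of_le ht.1] at hτ
      have hωτ : ω τ ≠ 0 := (hωpos τ ⟨hτ.1, hτ.2.trans ht.2⟩).ne'
      simp only
      rw [add_sub_cancel_right, mul_comm (ω τ), div_mul_cancel₀ _ hωτ]
    rw [intervalIntegral.integral_congr hcg, intervalIntegral.integral_of_le ht.1]
  have part1 : ∀ t ∈ Set.Icc a b,
      pD a ω α β p Nα f t = (Nα / (1 - α)) * ∑' n : ℕ, c ^ n *
        RLI a ω (β * n + 1) (fun s => g s / ω s) t := by
    intro t ht
    simp only [pD]
    rw [← hg, key t ht]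
    have hterm : ∀ n : ℕ, c ^ n * RLI a ω (β * n + 1) (fun s => g s / ω s) t
        = (ω t)⁻¹ * ((c ^ n / Real.Gamma (β * n + 1)) * J n t) := by
      intro n
      rw [hRLI t ht n, one_div, mul_inv]
      ring
    rw [tsum_congr hterm, tsum_mul_left, one_div, mul_inv, inv_div]
    ring
  refine ⟨part1, ?_⟩
  have hu : Summable (fun n : ℕ =>
      ‖Nα / (1 - α)‖ * (K ^ n / Real.Gamma (β * n + 1) * (Iab / w0))) :=
    ((hsum.mul_right (Iab / w0)).mul_left _)
  have hGbound : ∀ n : ℕ, ∀ t ∈ Set.Icc a b,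
      ‖(Nα / (1 - α)) * (c ^ n * RLI a ω (β * n + 1) (fun s => g s / ω s) t)‖
        ≤ ‖Nα / (1 - α)‖ * (K ^ n / Real.Gamma (β * n + 1) * (Iab / w0)) := by
    intro n t ht
    have hωt : w0 ≤ ω t := hx0 t ht
    have hωtpos : 0 < ω t := hωpos t ht
    rw [hRLI t ht n, norm_mul, norm_mul, norm_mul, norm_pow]
    apply mul_le_mul_of_nonneg_left _ (norm_nonneg _)
    have h1 : ‖1 / (Real.Gamma (β * n + 1) * ω t)‖ ≤ 1 / (Real.Gamma (β * n + 1) * w0) := by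
      rw [Real.norm_of_nonneg (by positivity)]
      apply one_div_le_one_div_of_le (by positivity)
      exact mul_le_mul_of_nonneg_left hωt (hΓpos n).le
    calc ‖c‖ ^ n * (‖1 / (Real.Gamma (β * n + 1) * ω t)‖ * ‖J n t‖)
        ≤ ‖c‖ ^ n * ((1 / (Real.Gamma (β * n + 1) * w0)) * (((b - a) ^ β) ^ n * Iab)) := by
          apply mul_le_mul_of_nonneg_left _ (by positivity)
          exact mul_le_mul h1 (hJbound t ht n) (norm_nonneg _) (by positivity)
      _ = K ^ n / Real.Gamma (β * n + 1) * (Iab / w0) := by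
          rw [hKdef, mul_pow, one_div, mul_inv, Real.norm_eq_abs]
          ring
  have hTU := tendstoUniformlyOn_tsum_nat (s := Set.Icc a b)
    (f := fun (n : ℕ) (t : ℝ) => (Nα / (1 - α)) * (c ^ n *
      RLI a ω (β * n + 1) (fun s => g s / ω s) t)) hu hGbound
  have hseq : (fun (N : ℕ) (t : ℝ) => (Nα / (1 - α)) * ∑ n ∈ Finset.range N, c ^ n *
        RLI a ω (β * n + 1) (fun s => g s / ω s) t)
      = fun (N : ℕ) (t : ℝ) => ∑ n ∈ Finset.range N, (Nα / (1 - α)) * (c ^ n *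
        RLI a ω (β * n + 1) (fun s => g s / ω s) t) := by
    funext N t
    rw [Finset.mul_sum]
  rw [hseq]
  apply (hTU.congr_right ?_).tendstoLocallyUniformlyOn
  intro t ht
  show (∑' n : ℕ, (Nα / (1 - α)) * (c ^ n *
      RLI a ω (β * n + 1) (fun s => g s / ω s) t)) = pD a ω α β p Nα f t
  rw [tsum_mul_left, ← part1 t ht]
end

section
/- For every natural number $n$ and every continuous function $f$ on $[a,b]$, the $n$-fold iterate of the power fractional integral satisfies ${}^pI_{a,\omega}^{n[\alpha,\beta]} f(t) = \sum_{m=0}^{n} \binom{n}{m} \chi(\alpha)^{n-m} (\ln p \cdot \varphi(\alpha))^m \, {}^{RL}I_{a,\omega}^{m\beta} f(t)$ for all $t \in [a,b]$, where ${}^{RL}I_{a,\omega}^{0} f = f$. -/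
open MeasureTheory

section FracAux
open intervalIntegral

private 
lemma kerInt {γ : ℝ} (hγ : 0 < γ) (c t : ℝ) :
    IntervalIntegrable (fun τ => (t - τ) ^ (γ - 1)) volume c t := by
  have h := (intervalIntegrable_rpow' (a := t - c) (b := t - t) (r := γ - 1)
    (by linarith)).comp_sub_left t
  simpa using h

lemma kerVal {γ : ℝ} (hγ : 0 < γ) {c t : ℝ} (h : c ≤ t) :
    ∫ τ in c..t, (t - τ) ^ (γ - 1) = (t - c) ^ γ / γ := by
  have h1 : (∫ τ in c..t, (t - τ) ^ (γ - 1)) = ∫ u in t - t..t - c, u ^ (γ - 1) :=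
    integral_comp_sub_left (fun u => u ^ (γ - 1)) t
  rw [h1, sub_self, integral_rpow (Or.inl (by linarith))]
  rw [Real.zero_rpow (by linarith), sub_add_cancel, sub_zero]

private 
lemma realBeta {u v : ℝ} (hu : 0 < u) (hv : 0 < v) :
    ∫ x in (0:ℝ)..1, x ^ (u - 1) * (1 - x) ^ (v - 1) =
      Real.Gamma u * Real.Gamma v / Real.Gamma (u + v) := by
  have key : Complex.Gamma u * Complex.Gamma v =
      Complex.Gamma (u + v) * Complex.betaIntegral u v :=
    Complex.Gamma_mul_Gamma_eq_betaIntegral (by simpa using hu) (by simpa using hv)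
  have hbeta : Complex.betaIntegral u v =
      ((∫ x in (0:ℝ)..1, x ^ (u - 1) * (1 - x) ^ (v - 1) : ℝ) : ℂ) := by
    rw [Complex.betaIntegral, ← intervalIntegral.integral_ofReal]
    apply intervalIntegral.integral_congr
    intro x hx
    rw [Set.uIcc_of_le (by norm_num : (0:ℝ) ≤ 1)] at hx
    have hx0 : (0:ℝ) ≤ x := hx.1
    have hx1 : (0:ℝ) ≤ 1 - x := by linarith [hx.2]
    show (x:ℂ) ^ ((u:ℂ) - 1) * (1 - (x:ℂ)) ^ ((v:ℂ) - 1) = ((x ^ (u - 1) * (1 - x) ^ (v - 1) : ℝ) : ℂ)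
    rw [Complex.ofReal_mul, Complex.ofReal_cpow hx0, Complex.ofReal_cpow hx1]
    push_cast
    ring
  have hGuv : Real.Gamma (u + v) ≠ 0 := (Real.Gamma_pos_of_pos (by linarith)).ne'
  rw [hbeta] at key
  rw [show ((u:ℂ) + v) = ((u + v : ℝ) : ℂ) by push_cast; ring] at key
  rw [Complex.Gamma_ofReal, Complex.Gamma_ofReal, Complex.Gamma_ofReal] at key
  have h2 : Real.Gamma u * Real.Gamma v =
      Real.Gamma (u + v) * ∫ x in (0:ℝ)..1, x ^ (u - 1) * (1 - x) ^ (v - 1) := by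
    exact_mod_cast key
  field_simp
  linarith [h2]

private lemma innerBeta {β₁ β₂ σ t : ℝ} (h1 : 0 < β₁) (h2 : 0 < β₂) (hst : σ < t) :
    ∫ τ in σ..t, (t - τ) ^ (β₁ - 1) * (τ - σ) ^ (β₂ - 1) =
      (t - σ) ^ (β₁ + β₂ - 1) * (Real.Gamma β₁ * Real.Gamma β₂ / Real.Gamma (β₁ + β₂)) := by
  have hc : (0:ℝ) < t - σ := by linarith
  set c := t - σ with hcdef
  have key : (∫ x in (0:ℝ)..1, (fun τ => (t - τ) ^ (β₁ - 1) * (τ - σ) ^ (β₂ - 1)) (c * x + σ))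
      = c⁻¹ • ∫ τ in c * 0 + σ..c * 1 + σ, (t - τ) ^ (β₁ - 1) * (τ - σ) ^ (β₂ - 1) :=
    integral_comp_mul_add (fun τ => (t - τ) ^ (β₁ - 1) * (τ - σ) ^ (β₂ - 1)) hc.ne' σ
  have hend : c * 0 + σ = σ := by ring
  have hend2 : c * 1 + σ = t := by rw [hcdef]; ring
  rw [hend, hend2] at key
  have key2 : (∫ x in (0:ℝ)..1, (fun τ => (t - τ) ^ (β₁ - 1) * (τ - σ) ^ (β₂ - 1)) (c * x + σ))
      = ∫ x in (0:ℝ)..1, c ^ (β₁ + β₂ - 2) * (x ^ (β₂ - 1) * (1 - x) ^ (β₁ - 1)) := by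
    apply intervalIntegral.integral_congr
    intro x hx
    rw [Set.uIcc_of_le (by norm_num : (0:ℝ) ≤ 1)] at hx
    have hx0 : (0:ℝ) ≤ x := hx.1
    have hx1 : (0:ℝ) ≤ 1 - x := by linarith [hx.2]
    have e1 : t - (c * x + σ) = c * (1 - x) := by rw [hcdef]; ring
    have e2 : c * x + σ - σ = c * x := by ring
    simp only [e1, e2]
    rw [Real.mul_rpow hc.le hx1, Real.mul_rpow hc.le hx0]
    rw [show β₁ + β₂ - 2 = (β₁ - 1) + (β₂ - 1) by ring, Real.rpow_add hc]
    ring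
  rw [key2, intervalIntegral.integral_const_mul, realBeta h2 h1] at key
  have : (∫ τ in σ..t, (t - τ) ^ (β₁ - 1) * (τ - σ) ^ (β₂ - 1))
      = c * (c ^ (β₁ + β₂ - 2) * (Real.Gamma β₂ * Real.Gamma β₁ / Real.Gamma (β₂ + β₁))) := by
    rw [smul_eq_mul] at key
    rw [key, ← mul_assoc, mul_inv_cancel₀ hc.ne', one_mul]
  rw [this, show Real.Gamma β₂ * Real.Gamma β₁ = Real.Gamma β₁ * Real.Gamma β₂ by ring,
    show β₂ + β₁ = β₁ + β₂ by ring, ← mul_assoc]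
  congr 1
  rw [show β₁ + β₂ - 1 = 1 + (β₁ + β₂ - 2) by ring, Real.rpow_add hc, Real.rpow_one]

private lemma kerMul {γ : ℝ} (hγ : 0 < γ) {g : ℝ → ℝ} (hg : Continuous g) (c t : ℝ) :
    IntervalIntegrable (fun τ => (t - τ) ^ (γ - 1) * g τ) volume c t :=
  (kerInt hγ c t).mul_continuousOn hg.continuousOn

lemma semigroupF {a t β₁ β₂ M : ℝ} {g : ℝ → ℝ} (h1 : 0 < β₁) (h2 : 0 < β₂)
    (hat : a ≤ t) (hg : Continuous g) (hM : ∀ x, |g x| ≤ M) :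
    (∫ τ in a..t, (t - τ) ^ (β₁ - 1) * ∫ σ in a..τ, (τ - σ) ^ (β₂ - 1) * g σ) =
      (Real.Gamma β₁ * Real.Gamma β₂ / Real.Gamma (β₁ + β₂)) *
        ∫ σ in a..t, (t - σ) ^ (β₁ + β₂ - 1) * g σ := by
  set B := Real.Gamma β₁ * Real.Gamma β₂ / Real.Gamma (β₁ + β₂) with hB
  set S : Set (ℝ × ℝ) := {q | a < q.2 ∧ q.2 ≤ q.1 ∧ q.1 ≤ t} with hS
  set Φ : ℝ × ℝ → ℝ :=
    S.indicator (fun q => (t - q.1) ^ (β₁ - 1) * ((q.1 - q.2) ^ (β₂ - 1) * g q.2)) with hΦ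
  have hSm : MeasurableSet S := by
    apply MeasurableSet.inter (measurableSet_lt measurable_const measurable_snd)
    exact MeasurableSet.inter (measurableSet_le measurable_snd measurable_fst)
      (measurableSet_le measurable_fst measurable_const)
  have hgm : Measurable g := hg.measurable
  have hΦm : Measurable Φ := by
    apply Measurable.indicator _ hSm
    measurability
  -- slices in τ
  have slice : ∀ τ : ℝ, (fun σ => Φ (τ, σ)) =
      if τ ∈ Set.Ioc a t then
        (Set.Ioc a τ).indicator (fun σ => (t - τ) ^ (β₁ - 1) * ((τ - σ) ^ (β₂ - 1) * g σ))
      else 0 := by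
    intro τ
    split_ifs with hτ
    · funext σ
      simp only [hΦ, Set.indicator_apply, hS, Set.mem_setOf_eq, Set.mem_Ioc]
      congr 1
      simp only [eq_iff_iff]
      exact ⟨fun h => ⟨h.1, h.2.1⟩, fun h => ⟨h.1, h.2, hτ.2⟩⟩
    · funext σ
      simp only [hΦ, Set.indicator_apply, hS, Set.mem_setOf_eq, Pi.zero_apply]
      rw [if_neg]
      rintro ⟨h₁, h₂, h₃⟩
      exact hτ ⟨lt_of_lt_of_le h₁ h₂, h₃⟩
  have sliceInt : ∀ τ : ℝ, Integrable (fun σ => Φ (τ, σ)) volume := by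
    intro τ
    rw [slice τ]
    split_ifs with hτ
    · have h := ((kerMul h2 hg a τ).const_mul ((t - τ) ^ (β₁ - 1)))
      rw [intervalIntegrable_iff, Set.uIoc_of_le hτ.1.le] at h
      exact h.integrable_indicator measurableSet_Ioc
    · exact integrable_zero _ _ _
  have sliceVal : ∀ τ : ℝ, (∫ σ, Φ (τ, σ)) =
      (Set.Ioc a t).indicator
        (fun τ => (t - τ) ^ (β₁ - 1) * ∫ σ in a..τ, (τ - σ) ^ (β₂ - 1) * g σ) τ := by
    intro τ
    rw [slice τ]
    split_ifs with hτ
    · rw [MeasureTheory.integral_indicator measurableSet_Ioc, Set.indicator_of_mem hτ,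
        MeasureTheory.integral_const_mul, intervalIntegral.integral_of_le hτ.1.le]
    · simp [Set.indicator_of_notMem hτ]
  have hM0 : 0 ≤ M := le_trans (abs_nonneg _) (hM 0)
  -- integrability on the product
  have hΦint : Integrable Φ (volume.prod volume) := by
    refine (integrable_prod_iff hΦm.aestronglyMeasurable).mpr ⟨ae_of_all _ sliceInt, ?_⟩
    set C := M * ((t - a) ^ β₂ / β₂) with hC
    have hC0 : 0 ≤ C := mul_nonneg hM0 (div_nonneg (Real.rpow_nonneg (by linarith) _) h2.le)
    have hD : Integrable ((Set.Ioc a t).indicator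
        (fun τ => (t - τ) ^ (β₁ - 1) * C)) volume := by
      have h := ((kerInt h1 a t).mul_const C)
      rw [intervalIntegrable_iff, Set.uIoc_of_le hat] at h
      exact h.integrable_indicator measurableSet_Ioc
    apply Integrable.mono' hD
    · exact (hΦm.stronglyMeasurable.norm.integral_prod_right').aestronglyMeasurable
    · refine ae_of_all _ fun τ => ?_
      have hnn : 0 ≤ ∫ σ, ‖Φ (τ, σ)‖ := integral_nonneg fun σ => norm_nonneg _
      rw [Real.norm_eq_abs, abs_of_nonneg hnn]
      by_cases hτ : τ ∈ Set.Ioc a t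
      · have hker : (0:ℝ) ≤ (t - τ) ^ (β₁ - 1) := Real.rpow_nonneg (by linarith [hτ.2]) _
        have step1 : ∀ σ, ‖Φ (τ, σ)‖ ≤
            (Set.Ioc a τ).indicator (fun σ => (t - τ) ^ (β₁ - 1) * ((τ - σ) ^ (β₂ - 1) * M)) σ := by
          intro σ
          have hΦs := congrFun (slice τ) σ
          rw [if_pos hτ] at hΦs
          rw [hΦs]
          by_cases hσ : σ ∈ Set.Ioc a τ
          · rw [Set.indicator_of_mem hσ, Set.indicator_of_mem hσ, Real.norm_eq_abs, abs_mul,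
              abs_mul, abs_of_nonneg hker,
              abs_of_nonneg (Real.rpow_nonneg (by linarith [hσ.2]) _)]
            refine mul_le_mul_of_nonneg_left ?_ hker
            exact mul_le_mul_of_nonneg_left (hM σ)
              (Real.rpow_nonneg (by linarith [hσ.2]) _)
          · rw [Set.indicator_of_notMem hσ, Set.indicator_of_notMem hσ]; simp
        have hint2 : Integrable ((Set.Ioc a τ).indicator
            (fun σ => (t - τ) ^ (β₁ - 1) * ((τ - σ) ^ (β₂ - 1) * M))) volume := by
          have h := (((kerInt h2 a τ).mul_const M).const_mul ((t - τ) ^ (β₁ - 1)))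
          rw [intervalIntegrable_iff, Set.uIoc_of_le hτ.1.le] at h
          exact h.integrable_indicator measurableSet_Ioc
        have hmono : (τ - a) ^ β₂ ≤ (t - a) ^ β₂ :=
          Real.rpow_le_rpow (by linarith [hτ.1.le]) (by linarith [hτ.2]) h2.le
        calc (∫ σ, ‖Φ (τ, σ)‖) ≤ ∫ σ, (Set.Ioc a τ).indicator
              (fun σ => (t - τ) ^ (β₁ - 1) * ((τ - σ) ^ (β₂ - 1) * M)) σ :=
            integral_mono ((sliceInt τ).norm) hint2 step1
          _ = (t - τ) ^ (β₁ - 1) * (M * ((τ - a) ^ β₂ / β₂)) := by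
            rw [MeasureTheory.integral_indicator measurableSet_Ioc]
            rw [show (fun σ => (t - τ) ^ (β₁ - 1) * ((τ - σ) ^ (β₂ - 1) * M)) =
              (fun σ => ((t - τ) ^ (β₁ - 1) * M) * (τ - σ) ^ (β₂ - 1)) from
              funext fun σ => by ring]
            rw [MeasureTheory.integral_const_mul, ← intervalIntegral.integral_of_le hτ.1.le,
              kerVal h2 hτ.1.le]
            ring
          _ ≤ (Set.Ioc a t).indicator (fun τ => (t - τ) ^ (β₁ - 1) * C) τ := by
            rw [Set.indicator_of_mem hτ, hC]
            refine mul_le_mul_of_nonneg_left ?_ hker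
            exact mul_le_mul_of_nonneg_left (by gcongr) hM0
      · have h0 : ∀ σ : ℝ, Φ (τ, σ) = 0 := by
          intro σ
          have hΦs := congrFun (slice τ) σ
          rw [if_neg hτ] at hΦs
          simpa using hΦs
        simp only [h0, norm_zero, MeasureTheory.integral_zero]
        rw [Set.indicator_of_notMem hτ]
  -- swap
  have hswap : (∫ τ, ∫ σ, Φ (τ, σ)) = ∫ σ, ∫ τ, Φ (τ, σ) := by
    have := MeasureTheory.integral_integral_swap (f := fun τ σ => Φ (τ, σ))
      (μ := volume) (ν := volume) (by exact hΦint)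
    simpa using this
  -- LHS
  have hLHS : (∫ τ in a..t, (t - τ) ^ (β₁ - 1) * ∫ σ in a..τ, (τ - σ) ^ (β₂ - 1) * g σ) =
      ∫ τ, ∫ σ, Φ (τ, σ) := by
    rw [intervalIntegral.integral_of_le hat]
    rw [show (fun τ => ∫ σ, Φ (τ, σ)) = (Set.Ioc a t).indicator
        (fun τ => (t - τ) ^ (β₁ - 1) * ∫ σ in a..τ, (τ - σ) ^ (β₂ - 1) * g σ)
      from funext sliceVal]
    rw [MeasureTheory.integral_indicator measurableSet_Ioc]
  -- RHS slices in σ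
  have hae : ∀ᵐ σ : ℝ, σ ≠ t := by
    refine MeasureTheory.ae_iff.mpr ?_
    convert Real.volume_singleton (a := t) using 2
    ext x; simp
  have sliceσ : ∀ σ : ℝ, σ ≠ t → (∫ τ, Φ (τ, σ)) =
      (Set.Ioc a t).indicator (fun σ => B * ((t - σ) ^ (β₁ + β₂ - 1) * g σ)) σ := by
    intro σ hσt
    by_cases hσ : σ ∈ Set.Ioc a t
    · have hσlt : σ < t := lt_of_le_of_ne hσ.2 hσt
      have hfun : (fun τ => Φ (τ, σ)) = (Set.Icc σ t).indicator
          (fun τ => (t - τ) ^ (β₁ - 1) * ((τ - σ) ^ (β₂ - 1) * g σ)) := by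
        funext τ
        simp only [hΦ, Set.indicator_apply, hS, Set.mem_setOf_eq, Set.mem_Icc]
        congr 1
        simp only [eq_iff_iff]
        exact ⟨fun h => ⟨h.2.1, h.2.2⟩, fun h => ⟨hσ.1, h.1, h.2⟩⟩
      rw [hfun, MeasureTheory.integral_indicator measurableSet_Icc, MeasureTheory.integral_Icc_eq_integral_Ioc,
        ← intervalIntegral.integral_of_le hσlt.le, Set.indicator_of_mem hσ]
      rw [show (fun τ => (t - τ) ^ (β₁ - 1) * ((τ - σ) ^ (β₂ - 1) * g σ)) =
        (fun τ => ((t - τ) ^ (β₁ - 1) * (τ - σ) ^ (β₂ - 1)) * g σ) from funext fun τ => by ring]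
      rw [intervalIntegral.integral_mul_const, innerBeta h1 h2 hσlt]
      ring
    · have hfun : (fun τ => Φ (τ, σ)) = fun _ => (0:ℝ) := by
        funext τ
        simp only [hΦ, Set.indicator_apply, hS, Set.mem_setOf_eq]
        rw [if_neg]
        rintro ⟨h₁, h₂, h₃⟩
        exact hσ ⟨h₁, le_trans h₂ h₃⟩
      rw [hfun, Set.indicator_of_notMem hσ]
      simp
  have hRHS : (∫ σ, ∫ τ, Φ (τ, σ)) = B * ∫ σ in a..t, (t - σ) ^ (β₁ + β₂ - 1) * g σ := by
    rw [MeasureTheory.integral_congr_ae (g := (Set.Ioc a t).indicator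
        (fun σ => B * ((t - σ) ^ (β₁ + β₂ - 1) * g σ))) (hae.mono fun σ h => sliceσ σ h)]
    rw [MeasureTheory.integral_indicator measurableSet_Ioc, MeasureTheory.integral_const_mul,
      ← intervalIntegral.integral_of_le hat]
  rw [hLHS, hswap, hRHS]

private lemma Fbound {a s γ M : ℝ} {g : ℝ → ℝ} (hγ : 0 < γ) (h : a ≤ s) (hg : Continuous g)
    (hM : ∀ x, |g x| ≤ M) :
    |∫ τ in a..s, (s - τ) ^ (γ - 1) * g τ| ≤ M * ((s - a) ^ γ / γ) := by
  have h1 : |∫ τ in a..s, (s - τ) ^ (γ - 1) * g τ| ≤ ∫ τ in a..s, |(s - τ) ^ (γ - 1) * g τ| := by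
    have := intervalIntegral.norm_integral_le_integral_norm
      (μ := volume) (f := fun τ => (s - τ) ^ (γ - 1) * g τ) h
    simpa only [Real.norm_eq_abs] using this
  have h2 : (∫ τ in a..s, |(s - τ) ^ (γ - 1) * g τ|) ≤ ∫ τ in a..s, (s - τ) ^ (γ - 1) * M := by
    apply intervalIntegral.integral_mono_on h ((kerMul hγ hg a s).abs) ((kerInt hγ a s).mul_const M)
    intro τ hτ
    rw [abs_mul, abs_of_nonneg (Real.rpow_nonneg (by linarith [hτ.2]) _)]
    exact mul_le_mul_of_nonneg_left (hM τ) (Real.rpow_nonneg (by linarith [hτ.2]) _)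
  have h3 : (∫ τ in a..s, (s - τ) ^ (γ - 1) * M) = M * ((s - a) ^ γ / γ) := by
    rw [intervalIntegral.integral_mul_const, kerVal hγ h]; ring
  linarith
lemma measF {a γ : ℝ} {g : ℝ → ℝ} (hγ : 0 < γ) (hg : Continuous g) :
    ∃ G : ℝ → ℝ, Measurable G ∧ ∀ s, a ≤ s → G s = ∫ τ in a..s, (s - τ) ^ (γ - 1) * g τ := by
  have hgm : Measurable g := hg.measurable
  set S : Set (ℝ × ℝ) := {q | a < q.2 ∧ q.2 ≤ q.1} with hS
  have hSm : MeasurableSet S :=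
    MeasurableSet.inter (measurableSet_lt measurable_const measurable_snd)
      (measurableSet_le measurable_snd measurable_fst)
  set K : ℝ × ℝ → ℝ := S.indicator (fun q => (q.1 - q.2) ^ (γ - 1) * g q.2) with hK
  have hKm : Measurable K := by
    apply Measurable.indicator _ hSm
    measurability
  refine ⟨fun s => ∫ σ, K (s, σ), ?_, ?_⟩
  · exact (hKm.stronglyMeasurable.integral_prod_right').measurable
  · intro s hs
    have hfun : (fun σ => K (s, σ)) =
        (Set.Ioc a s).indicator (fun σ => (s - σ) ^ (γ - 1) * g σ) := by
      funext σ
      simp only [hK, Set.indicator_apply, hS, Set.mem_setOf_eq, Set.mem_Ioc]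
    show (∫ σ, K (s, σ)) = _
    rw [hfun, MeasureTheory.integral_indicator measurableSet_Ioc,
      ← intervalIntegral.integral_of_le hs]

private 
lemma binom_step (χ c : ℝ) (T : ℕ → ℝ) (n : ℕ) :
    χ * (∑ m ∈ Finset.range (n+1), (n.choose m : ℝ) * χ^(n-m) * c^m * T m)
    + ∑ m ∈ Finset.range (n+1), (n.choose m : ℝ) * χ^(n-m) * c^m * (c * T (m+1))
    = ∑ m ∈ Finset.range (n+2), ((n+1).choose m : ℝ) * χ^(n+1-m) * c^m * T m := by
  rw [Finset.sum_range_succ' (fun m => ((n+1).choose m : ℝ) * χ^(n+1-m) * c^m * T m)]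
  have hsplit : ∀ m ∈ Finset.range (n+1),
      ((n+1).choose (m+1) : ℝ) * χ^(n+1-(m+1)) * c^(m+1) * T (m+1)
      = (n.choose m : ℝ) * χ^(n-m) * c^m * (c * T (m+1))
        + (n.choose (m+1) : ℝ) * χ^(n-m) * c^(m+1) * T (m+1) := by
    intro m _
    rw [Nat.choose_succ_succ, Nat.succ_sub_succ]
    push_cast
    ring
  rw [Finset.sum_congr rfl hsplit, Finset.sum_add_distrib]
  have h2 : ∑ m ∈ Finset.range (n+1), (n.choose (m+1) : ℝ) * χ^(n-m) * c^(m+1) * T (m+1)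
      = χ * (∑ m ∈ Finset.range (n+1), (n.choose m : ℝ) * χ^(n-m) * c^m * T m)
        - ((n+1).choose 0 : ℝ) * χ^(n+1-0) * c^0 * T 0 := by
    rw [Finset.sum_range_succ, Nat.choose_succ_self]
    rw [Finset.mul_sum, Finset.sum_range_succ' (fun m => χ * ((n.choose m : ℝ) * χ^(n-m) * c^m * T m))]
    have h3 : ∀ m ∈ Finset.range n,
        χ * ((n.choose (m+1) : ℝ) * χ^(n-(m+1)) * c^(m+1) * T (m+1))
        = (n.choose (m+1) : ℝ) * χ^(n-m) * c^(m+1) * T (m+1) := by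
      intro m hm
      rw [Finset.mem_range] at hm
      rw [show n - m = (n - (m+1)) + 1 by omega, pow_succ]
      ring
    rw [Finset.sum_congr rfl h3]
    simp
    ring
  rw [h2]
  ring

end FracAux

/-- The `n`-fold iterate of the power fractional integral expands binomially in
weighted Riemann–Liouville integrals (with `RLI` of order `0` interpreted as the
identity). -/
theorem pI_iterate_formula (a b α β p Nα : ℝ) (hab : a ≤ b) (hα0 : 0 ≤ α) (hα1 : α < 1)
    (hβ : 0 < β) (hp : 0 < p) (hN : 0 < Nα) (ω f : ℝ → ℝ)
    (hω : ContinuousOn ω (Set.Icc a b)) (hωpos : ∀ t ∈ Set.Icc a b, 0 < ω t)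
    (hf : ContinuousOn f (Set.Icc a b)) (n : ℕ) :
    ∀ t ∈ Set.Icc a b,
      (pI a ω α β p Nα)^[n] f t =
        ∑ m ∈ Finset.range (n + 1), (n.choose m : ℝ) * ((1 - α) / Nα) ^ (n - m) *
          (Real.log p * (α / Nα)) ^ m *
          (if m = 0 then f t else RLI a ω (m * β) f t) := by
  classical
  have hgc : ContinuousOn (fun x => ω x * f x) (Set.Icc a b) := hω.mul hf
  set g : ℝ → ℝ := Set.IccExtend hab ((Set.Icc a b).restrict (fun x => ω x * f x)) with hgdef
  have hgcont : Continuous g :=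
    Continuous.Icc_extend' (continuousOn_iff_continuous_restrict.mp hgc)
  have hgeq : ∀ x ∈ Set.Icc a b, g x = ω x * f x := by
    intro x hx
    rw [hgdef, Set.IccExtend_of_mem hab _ hx]
    rfl
  obtain ⟨M, hMb⟩ := (isCompact_Icc (a := a) (b := b)).exists_bound_of_continuousOn hgc
  have hM : ∀ x, |g x| ≤ M := by
    intro x
    exact hMb _ (Set.projIcc a b hab x).2
  have hM0 : 0 ≤ M := le_trans (abs_nonneg _) (hM a)
  have hωne : ∀ t ∈ Set.Icc a b, ω t ≠ 0 := fun t ht => (hωpos t ht).ne'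
  have hFRL : ∀ γ : ℝ, 0 < γ → ∀ t ∈ Set.Icc a b, RLI a ω γ f t
      = (1 / (Real.Gamma γ * ω t)) * ∫ τ in a..t, (t - τ) ^ (γ - 1) * g τ := by
    intro γ hγ t ht
    rw [RLI]
    congr 1
    apply intervalIntegral.integral_congr
    intro τ hτ
    rw [Set.uIcc_of_le ht.1] at hτ
    simp only [hgeq τ ⟨hτ.1, le_trans hτ.2 ht.2⟩]
  set χ := (1 - α) / Nα with hχ
  set c := Real.log p * (α / Nα) with hc
  have hΓβ : Real.Gamma β ≠ 0 := (Real.Gamma_pos_of_pos hβ).ne'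
  induction n with
  | zero => intro t ht; simp
  | succ n IH =>
    intro t ht
    have hta : a ≤ t := ht.1
    set P : ℝ → ℝ := (pI a ω α β p Nα)^[n] f with hP
    set u : ℕ → ℝ → ℝ := fun m τ => if m = 0 then g τ
        else (1 / Real.Gamma ((m:ℝ)*β)) * (∫ σ in a..τ, (τ - σ) ^ ((m:ℝ)*β - 1) * g σ) with hu
    have hmβ : ∀ m : ℕ, (0:ℝ) < ((m:ℝ)+1)*β := by
      intro m
      have : (0:ℝ) ≤ (m:ℝ) := Nat.cast_nonneg m
      nlinarith
    have hmβ' : ∀ m : ℕ, m ≠ 0 → (0:ℝ) < (m:ℝ)*β := by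
      intro m hm
      have : (1:ℝ) ≤ (m:ℝ) := by exact_mod_cast Nat.one_le_iff_ne_zero.mpr hm
      nlinarith
    have hiter : (pI a ω α β p Nα)^[n+1] f t
        = χ * P t + c * RLI a ω β P t := by
      rw [Function.iterate_succ_apply']
      rfl
    -- Step A : integrand identity
    have hA1 : ∀ τ ∈ Set.uIcc a t, (t - τ) ^ (β-1) * (ω τ * P τ)
        = ∑ m ∈ Finset.range (n+1),
            ((n.choose m : ℝ) * χ ^ (n-m) * c ^ m) * ((t - τ) ^ (β-1) * u m τ) := by
      intro τ hτ
      rw [Set.uIcc_of_le hta] at hτ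
      have hτab : τ ∈ Set.Icc a b := ⟨hτ.1, le_trans hτ.2 ht.2⟩
      have hωτ : ω τ ≠ 0 := hωne τ hτab
      rw [IH τ hτab]
      simp only [Finset.mul_sum]
      apply Finset.sum_congr rfl
      intro m hm
      have key : ω τ * (if m = 0 then f τ else RLI a ω (m * β) f τ) = u m τ := by
        by_cases hm0 : m = 0
        · subst hm0
          simp [hu, hgeq τ hτab]
        · rw [if_neg hm0, hu]
          simp only
          rw [if_neg hm0]
          rw [hFRL ((m:ℝ)*β) (hmβ' m hm0) τ hτab]
          field_simp
      rw [← key]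
      ring
    -- Step B : integrability of each summand
    have hInt : ∀ m ∈ Finset.range (n+1), IntervalIntegrable
        (fun τ => ((n.choose m : ℝ) * χ ^ (n-m) * c ^ m) * ((t - τ) ^ (β-1) * u m τ))
        volume a t := by
      intro m _
      apply IntervalIntegrable.const_mul
      by_cases hm0 : m = 0
      · subst hm0
        have h0 : (fun τ => (t - τ) ^ (β-1) * u 0 τ) = fun τ => (t - τ) ^ (β-1) * g τ := by
          funext τ
          simp only [hu, if_pos rfl]
        rw [h0]
        exact kerMul hβ hgcont a t
      · have hγ := hmβ' m hm0
        have hΓγ : Real.Gamma ((m:ℝ)*β) ≠ 0 := (Real.Gamma_pos_of_pos hγ).ne'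
        obtain ⟨G, hGm, hGeq⟩ := measF (a := a) hγ hgcont
        rw [intervalIntegrable_iff, Set.uIoc_of_le hta]
        have hker : IntegrableOn (fun τ => (t - τ) ^ (β-1)) (Set.Ioc a t) volume := by
          have h := kerInt hβ a t
          rwa [intervalIntegrable_iff, Set.uIoc_of_le hta] at h
        have hbase : Integrable
            (fun τ => ((1 / Real.Gamma ((m:ℝ)*β)) * G τ) * (t - τ) ^ (β-1))
            (volume.restrict (Set.Ioc a t)) := by
          apply MeasureTheory.Integrable.bdd_mul
            (c := |1 / Real.Gamma ((m:ℝ)*β)| * (M * ((t - a) ^ ((m:ℝ)*β) / ((m:ℝ)*β)))) hker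
            ((hGm.const_mul _).aestronglyMeasurable.restrict)
          filter_upwards [MeasureTheory.ae_restrict_mem measurableSet_Ioc] with τ hτ
          rw [Real.norm_eq_abs, abs_mul]
          apply mul_le_mul_of_nonneg_left _ (abs_nonneg _)
          rw [hGeq τ hτ.1.le]
          refine le_trans (Fbound hγ hτ.1.le hgcont hM) ?_
          apply mul_le_mul_of_nonneg_left _ hM0
          have hr : (τ - a) ^ ((m:ℝ)*β) ≤ (t - a) ^ ((m:ℝ)*β) :=
            Real.rpow_le_rpow (by linarith [hτ.1.le]) (by linarith [hτ.2]) hγ.le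
          exact (div_le_div_iff_of_pos_right hγ).mpr hr
        apply hbase.congr
        filter_upwards [MeasureTheory.ae_restrict_mem measurableSet_Ioc] with τ hτ
        simp only [hu]
        rw [if_neg hm0, hGeq τ hτ.1.le]
        ring
    -- Step C : value of each integral
    have hV : ∀ m : ℕ, (∫ τ in a..t, (t - τ) ^ (β-1) * u m τ)
        = (Real.Gamma β / Real.Gamma (((m:ℝ)+1)*β)) *
            ∫ σ in a..t, (t - σ) ^ (((m:ℝ)+1)*β - 1) * g σ := by
      intro m
      by_cases hm0 : m = 0
      · subst hm0
        have h0 : (fun τ => (t - τ) ^ (β-1) * u 0 τ) = fun τ => (t - τ) ^ (β-1) * g τ := by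
          funext τ
          simp only [hu, if_pos rfl]
        rw [h0]
        norm_num [div_self hΓβ]
      · have hγ := hmβ' m hm0
        have hΓγ : Real.Gamma ((m:ℝ)*β) ≠ 0 := (Real.Gamma_pos_of_pos hγ).ne'
        have hΓs : Real.Gamma (((m:ℝ)+1)*β) ≠ 0 := (Real.Gamma_pos_of_pos (hmβ m)).ne'
        have step1 : (∫ τ in a..t, (t - τ) ^ (β-1) * u m τ)
            = (1 / Real.Gamma ((m:ℝ)*β)) * ∫ τ in a..t, (t - τ) ^ (β-1) *
                ∫ σ in a..τ, (τ - σ) ^ ((m:ℝ)*β - 1) * g σ := by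
          rw [← intervalIntegral.integral_const_mul]
          apply intervalIntegral.integral_congr
          intro τ _
          simp only [hu]
          rw [if_neg hm0]
          ring
        rw [step1, semigroupF hβ hγ hta hgcont hM,
          show β + (m:ℝ)*β = ((m:ℝ)+1)*β by ring, ← mul_assoc]
        congr 1
        field_simp
    -- Step D : the Riemann–Liouville integral of the iterate
    have hRLIP : RLI a ω β P t = (1 / (Real.Gamma β * ω t)) *
        ∑ m ∈ Finset.range (n+1), ((n.choose m : ℝ) * χ ^ (n-m) * c ^ m) *
          ((Real.Gamma β / Real.Gamma (((m:ℝ)+1)*β)) *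
            ∫ σ in a..t, (t - σ) ^ (((m:ℝ)+1)*β - 1) * g σ) := by
      rw [RLI]
      congr 1
      rw [intervalIntegral.integral_congr hA1, intervalIntegral.integral_finset_sum hInt]
      apply Finset.sum_congr rfl
      intro m hm
      rw [intervalIntegral.integral_const_mul, hV m]
    set T : ℕ → ℝ := fun m => if m = 0 then f t else RLI a ω (m * β) f t with hT
    have hTm : ∀ m : ℕ, T (m+1)
        = (1 / (Real.Gamma (((m:ℝ)+1)*β) * ω t)) *
            ∫ σ in a..t, (t - σ) ^ (((m:ℝ)+1)*β - 1) * g σ := by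
      intro m
      rw [hT]
      simp only
      rw [if_neg (Nat.succ_ne_zero m)]
      rw [show ((m+1:ℕ):ℝ) = (m:ℝ)+1 by push_cast; ring]
      exact hFRL (((m:ℝ)+1)*β) (hmβ m) t ht
    have hcR : c * RLI a ω β P t = ∑ m ∈ Finset.range (n+1),
        ((n.choose m : ℝ) * χ ^ (n-m) * c ^ m) * (c * T (m+1)) := by
      rw [hRLIP, Finset.mul_sum, Finset.mul_sum]
      apply Finset.sum_congr rfl
      intro m hm
      rw [hTm m]
      have hΓs : Real.Gamma (((m:ℝ)+1)*β) ≠ 0 := (Real.Gamma_pos_of_pos (hmβ m)).ne'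
      have hωt : ω t ≠ 0 := hωne t ht
      field_simp
    have hIH : P t = ∑ m ∈ Finset.range (n+1),
        ((n.choose m : ℝ) * χ ^ (n-m) * c ^ m) * T m := by
      rw [IH t ht]
    rw [hiter, hIH, hcR, binom_step χ c T n]
end

section
/- The $n$-fold power fractional integral of the reciprocal weight is given explicitly by ${}^pI_{a,\omega}^{n[\alpha,\beta]}\left(\frac{1}{\omega}\right)(t) = \frac{1}{\omega(t)} \sum_{m=0}^{n} \binom{n}{m} \chi(\alpha)^{n-m} (\ln p \cdot \varphi(\alpha))^m \frac{(t-a)^{m\beta}}{\Gamma(m\beta+1)}$ for all $t \in [a,b]$. -/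
open MeasureTheory

lemma real_beta {u v : ℝ} (hu : 0 < u) (hv : 0 < v) :
    ∫ x in (0:ℝ)..1, x ^ (u-1) * (1-x) ^ (v-1)
      = Real.Gamma u * Real.Gamma v / Real.Gamma (u+v) := by
  have h := Complex.Gamma_mul_Gamma_eq_betaIntegral (s := (u:ℂ)) (t := (v:ℂ))
    (by simpa using hu) (by simpa using hv)
  have hB : Complex.betaIntegral (u:ℂ) (v:ℂ)
      = ((∫ x in (0:ℝ)..1, x ^ (u-1) * (1-x) ^ (v-1) : ℝ) : ℂ) := by
    rw [Complex.betaIntegral, ← intervalIntegral.integral_ofReal]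
    apply intervalIntegral.integral_congr
    intro x hx
    rw [Set.uIcc_of_le zero_le_one] at hx
    obtain ⟨h0, h1⟩ := hx
    push_cast [Complex.ofReal_cpow h0, Complex.ofReal_cpow (show (0:ℝ) ≤ 1 - x by linarith)]
    ring
  rw [hB, Complex.Gamma_ofReal, Complex.Gamma_ofReal, ← Complex.ofReal_add,
    Complex.Gamma_ofReal, ← Complex.ofReal_mul, ← Complex.ofReal_mul] at h
  have h' := Complex.ofReal_injective h
  have hG : Real.Gamma (u+v) ≠ 0 := (Real.Gamma_pos_of_pos (by linarith)).ne'
  field_simp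
  linarith [h']

lemma cont_rpow (a γ : ℝ) (hγ : 0 ≤ γ) : Continuous (fun τ : ℝ => (τ - a) ^ γ) :=
  (Real.continuous_rpow_const hγ).comp (continuous_id.sub continuous_const)

lemma intgr_key (a t β γ : ℝ) (hβ : 0 < β) (hγ : 0 ≤ γ) :
    IntervalIntegrable (fun τ => (t - τ) ^ (β-1) * (τ - a) ^ γ) volume a t := by
  have h1 : IntervalIntegrable (fun τ : ℝ => (t - τ) ^ (β-1)) volume a t := by
    have := (intervalIntegral.intervalIntegrable_rpow' (a := t - a) (b := t - t)
      (show (-1:ℝ) < β - 1 by linarith)).comp_sub_left t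
    simpa using this
  exact h1.mul_continuousOn (cont_rpow a γ hγ).continuousOn

lemma key_integral (a t β γ : ℝ) (hat : a ≤ t) (hβ : 0 < β) (hγ : 0 ≤ γ) :
    ∫ τ in a..t, (t - τ) ^ (β-1) * (τ - a) ^ γ
      = (t-a) ^ (γ + β) * (Real.Gamma (γ+1) * Real.Gamma β / Real.Gamma (γ + β + 1)) := by
  rcases eq_or_lt_of_le hat with h | h
  · subst h
    rw [intervalIntegral.integral_same, sub_self, Real.zero_rpow (by positivity)]
    ring
  · set s := t - a with hs
    have hs0 : 0 < s := by simp [hs]; linarith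
    have sub : (∫ τ in a..t, (t - τ) ^ (β-1) * (τ - a) ^ γ)
        = s • ∫ x in (0:ℝ)..1, (t - (s*x + a)) ^ (β-1) * ((s*x + a) - a) ^ γ := by
      rw [intervalIntegral.integral_comp_mul_add
        (fun τ => (t - τ) ^ (β-1) * (τ - a) ^ γ) hs0.ne' a, smul_smul,
        mul_inv_cancel₀ hs0.ne', one_smul, mul_zero, zero_add, mul_one]
      congr 1
      simp [hs]
    rw [sub]
    have congr1 : (∫ x in (0:ℝ)..1, (t - (s*x + a)) ^ (β-1) * ((s*x + a) - a) ^ γ)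
        = ∫ x in (0:ℝ)..1, (s ^ (β-1) * s ^ γ) * (x ^ ((γ+1)-1) * (1-x) ^ (β-1)) := by
      apply intervalIntegral.integral_congr
      intro x hx
      rw [Set.uIcc_of_le zero_le_one] at hx
      obtain ⟨h0, h1⟩ := hx
      dsimp only
      have e1 : t - (s*x + a) = s * (1 - x) := by rw [hs]; ring
      have e2 : (s*x + a) - a = s * x := by ring
      rw [e1, e2, Real.mul_rpow hs0.le (by linarith), Real.mul_rpow hs0.le h0]
      ring_nf
    rw [congr1, intervalIntegral.integral_const_mul,
      real_beta (by linarith : (0:ℝ) < γ+1) hβ]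
    rw [smul_eq_mul]
    have : s * (s ^ (β-1) * s ^ γ) = s ^ (γ + β) := by
      have h1 : s ^ (γ + β) = s ^ γ * (s ^ (β-1) * s ^ (1:ℝ)) := by
        rw [← Real.rpow_add hs0, ← Real.rpow_add hs0]; ring_nf
      rw [h1, Real.rpow_one]; ring
    have e3 : γ + 1 + β = γ + β + 1 := by ring
    rw [← mul_assoc, this, e3]

lemma pascal_sum (c d : ℝ) (x : ℕ → ℝ) (n : ℕ) :
    ∑ m ∈ Finset.range (n+1+1), (((n+1).choose m : ℕ) : ℝ) * c ^ (n+1-m) * d ^ m * x m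
      = c * ∑ m ∈ Finset.range (n+1), ((n.choose m : ℕ) : ℝ) * c ^ (n-m) * d ^ m * x m
        + d * ∑ m ∈ Finset.range (n+1), ((n.choose m : ℕ) : ℝ) * c ^ (n-m) * d ^ m * x (m+1) := by
  rw [Finset.sum_range_succ' (fun m => (((n+1).choose m : ℕ):ℝ) * c^(n+1-m) * d^m * x m) (n+1)]
  have step : ∀ m ∈ Finset.range (n+1),
      (fun m => (((n+1).choose (m+1):ℕ):ℝ) * c^(n+1-(m+1)) * d^(m+1) * x (m+1)) m
      = ((n.choose (m+1):ℕ):ℝ) * c^(n-m) * d^(m+1) * x (m+1)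
        + ((n.choose m:ℕ):ℝ) * c^(n-m) * d^(m+1) * x (m+1) := by
    intro m _
    have h1 : n + 1 - (m+1) = n - m := by omega
    dsimp only
    rw [h1, Nat.choose_succ_succ]
    push_cast; ring
  rw [Finset.sum_congr rfl step, Finset.sum_add_distrib]
  have hA : ∑ m ∈ Finset.range (n+1), ((n.choose m:ℕ):ℝ) * c^(n-m) * d^(m+1) * x (m+1)
      = d * ∑ m ∈ Finset.range (n+1), ((n.choose m:ℕ):ℝ) * c^(n-m) * d^m * x (m+1) := by
    rw [Finset.mul_sum]; apply Finset.sum_congr rfl; intro m _; ring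
  have hB : (∑ m ∈ Finset.range (n+1), ((n.choose (m+1):ℕ):ℝ) * c^(n-m) * d^(m+1) * x (m+1))
        + (((n+1).choose 0:ℕ):ℝ) * c^(n+1-0) * d^0 * x 0
      = c * ∑ m ∈ Finset.range (n+1), ((n.choose m:ℕ):ℝ) * c^(n-m) * d^m * x m := by
    rw [Finset.sum_range_succ' (fun m => ((n.choose m:ℕ):ℝ) * c^(n-m) * d^m * x m) n,
      mul_add, Finset.mul_sum,
      Finset.sum_range_succ (fun m => ((n.choose (m+1):ℕ):ℝ) * c^(n-m) * d^(m+1) * x (m+1)) n]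
    have hlast : ((n.choose (n+1):ℕ):ℝ) * c^(n-n) * d^(n+1) * x (n+1) = 0 := by
      simp [Nat.choose_succ_self]
    rw [hlast, add_zero]
    congr 1
    · apply Finset.sum_congr rfl
      intro m hm
      have hmn : m < n := Finset.mem_range.mp hm
      have h2 : n - m = (n - (m+1)) + 1 := by omega
      rw [h2, pow_succ]
      ring
    · have h3 : n + 1 - 0 = (n - 0) + 1 := by omega
      rw [h3, pow_succ]
      simp
      ring
  linarith [hA, hB]

/-- Explicit formula for the `n`-fold power fractional integral of the reciprocal
weight. -/
theorem pI_iterate_inv_weight (a b α β p Nα : ℝ) (hab : a ≤ b) (hα0 : 0 ≤ α) (hα1 : α < 1)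
    (hβ : 0 < β) (hp : 0 < p) (hN : 0 < Nα) (ω : ℝ → ℝ)
    (hω : ContinuousOn ω (Set.Icc a b)) (hωpos : ∀ t ∈ Set.Icc a b, 0 < ω t) (n : ℕ) :
    ∀ t ∈ Set.Icc a b,
      (pI a ω α β p Nα)^[n] (fun s => 1 / ω s) t =
        (1 / ω t) * ∑ m ∈ Finset.range (n + 1), (n.choose m : ℝ) *
          ((1 - α) / Nα) ^ (n - m) * (Real.log p * (α / Nα)) ^ m *
          ((t - a) ^ ((m : ℝ) * β) / Real.Gamma ((m : ℝ) * β + 1)) := by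
  induction n with
  | zero =>
    intro t ht
    simp [Real.Gamma_one]
  | succ n ih =>
    intro t ht
    obtain ⟨hta, htb⟩ := ht
    rw [Function.iterate_succ_apply']
    set χ : ℝ := (1 - α) / Nα with hχ
    set L : ℝ := Real.log p * (α / Nα) with hL
    set x : ℕ → ℝ := fun m => (t - a) ^ ((m : ℝ) * β) / Real.Gamma ((m : ℝ) * β + 1) with hx
    have hωt : ω t ≠ 0 := (hωpos t ⟨hta, htb⟩).ne'
    have hΓβ : Real.Gamma β ≠ 0 := (Real.Gamma_pos_of_pos hβ).ne'
    have hcongr : (∫ τ in a..t, (t - τ) ^ (β-1)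
          * (ω τ * (pI a ω α β p Nα)^[n] (fun s => 1/ω s) τ))
        = ∫ τ in a..t, ∑ m ∈ Finset.range (n+1), (n.choose m : ℝ) * χ^(n-m) * L^m
            * (1/Real.Gamma ((m:ℝ)*β+1)) * ((t - τ)^(β-1) * (τ - a)^((m:ℝ)*β)) := by
      apply intervalIntegral.integral_congr
      intro τ hτ
      rw [Set.uIcc_of_le hta] at hτ
      obtain ⟨h1, h2⟩ := hτ
      have hτab : τ ∈ Set.Icc a b := ⟨h1, le_trans h2 htb⟩
      have hωτ : ω τ ≠ 0 := (hωpos τ hτab).ne'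
      dsimp only
      rw [ih τ hτab, ← mul_assoc (ω τ), mul_one_div, div_self hωτ, one_mul,
        Finset.mul_sum]
      apply Finset.sum_congr rfl
      intro m _
      ring
    have hint : (∫ τ in a..t, ∑ m ∈ Finset.range (n+1), (n.choose m : ℝ) * χ^(n-m) * L^m
            * (1/Real.Gamma ((m:ℝ)*β+1)) * ((t - τ)^(β-1) * (τ - a)^((m:ℝ)*β)))
        = Real.Gamma β * ∑ m ∈ Finset.range (n+1), (n.choose m : ℝ) * χ^(n-m) * L^m
            * x (m+1) := by
      rw [intervalIntegral.integral_finset_sum]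
      · rw [Finset.mul_sum]
        apply Finset.sum_congr rfl
        intro m _
        rw [intervalIntegral.integral_const_mul,
          key_integral a t β ((m:ℝ)*β) hta hβ (by positivity)]
        have e1 : (m:ℝ)*β + β = (((m+1:ℕ)):ℝ)*β := by push_cast; ring
        have hΓm : Real.Gamma ((m:ℝ)*β+1) ≠ 0 :=
          (Real.Gamma_pos_of_pos (by positivity)).ne'
        rw [e1, hx]
        dsimp only
        have hΓm1 : Real.Gamma ((((m+1:ℕ)):ℝ)*β+1) ≠ 0 :=
          (Real.Gamma_pos_of_pos (by positivity)).ne'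
        field_simp
      · intro m _
        exact (intgr_key a t β ((m:ℝ)*β) hβ (by positivity)).const_mul _
    have hpas := pascal_sum χ L x n
    simp only [pI, RLI, ← hχ, ← hL]
    rw [ih t ⟨hta, htb⟩, hcongr, hint]
    have hxeq : ∀ N : ℕ, ∑ m ∈ Finset.range (N+1), (N.choose m : ℝ) * χ^(N-m) * L^m *
          ((t - a) ^ ((m : ℝ) * β) / Real.Gamma ((m : ℝ) * β + 1))
        = ∑ m ∈ Finset.range (N+1), (N.choose m : ℝ) * χ^(N-m) * L^m * x m := by
      intro N; rfl
    rw [hxeq n, hxeq (n+1), hpas]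
    field_simp
end

section
/- First-order power Taylor expansion of the identity function: with unit weight $\omega \equiv 1$ and $f(t) = t - a$, one has ${}^pD_{a,1}^{\alpha,\beta} f(t) = \frac{1}{\chi(\alpha)} \sum_{n=0}^{\infty} \frac{(-\mu_\alpha \ln p)^n (t-a)^{\beta n + 1}}{\Gamma(\beta n + 2)}$ for all $t \geq a$. -/
open MeasureTheory

private 
lemma summable_ML {β : ℝ} (hβ : 0 < β) {y : ℝ} (hy : 0 ≤ y) :
    Summable (fun n : ℕ => y ^ n / Real.Gamma (β * n + 1)) := by
  obtain ⟨k, hk⟩ := exists_nat_ge (1 / β)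
  set K : ℕ := k + 1 with hK
  have hK1 : (1:ℝ) ≤ β * K := by
    have : (1/β) ≤ K := le_trans hk (by exact_mod_cast Nat.le_succ k)
    calc (1:ℝ) = β * (1/β) := by field_simp
    _ ≤ β * K := by nlinarith
  haveI : NeZero K := ⟨Nat.succ_ne_zero k⟩
  -- the auxiliary summable function
  set M : ℝ := max 1 (y ^ K) with hM
  have hg : Summable (fun n : ℕ => y ^ n / (Nat.factorial (n / K) : ℝ)) := by
    rw [← (Nat.divModEquiv K).symm.summable_iff]
    have hnonneg : 0 ≤ fun p : ℕ × Fin K =>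
        ((fun n : ℕ => y ^ n / (Nat.factorial (n / K) : ℝ)) ∘ (Nat.divModEquiv K).symm) p := by
      intro p
      exact div_nonneg (pow_nonneg hy _) (by positivity)
    refine (summable_prod_of_nonneg hnonneg).mpr ⟨fun m => ?_, ?_⟩
    · exact .of_finite
    · have hbase := (Real.summable_pow_div_factorial (y ^ K)).mul_left ((K : ℝ) * M)
      refine hbase.of_nonneg_of_le (fun m => tsum_nonneg fun r => hnonneg (m, r)) (fun m => ?_)
      have hval : ∀ r : Fin K,
          ((fun n : ℕ => y ^ n / (Nat.factorial (n / K) : ℝ)) ∘ (Nat.divModEquiv K).symm) (m, r)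
            = y ^ (m * K + (r:ℕ)) / (Nat.factorial m : ℝ) := by
        intro r
        simp only [Function.comp, Nat.divModEquiv, Equiv.coe_fn_symm_mk]
        congr 2
        rw [Nat.add_comm, Nat.add_mul_div_right _ _ (Nat.pos_of_neZero K),
          Nat.div_eq_of_lt r.is_lt, Nat.zero_add]
      calc (∑' r : Fin K, ((fun n : ℕ => y ^ n / (Nat.factorial (n / K) : ℝ)) ∘
              (Nat.divModEquiv K).symm) (m, r))
          = ∑ r : Fin K, y ^ (m * K + (r:ℕ)) / (Nat.factorial m : ℝ) := by
            rw [tsum_fintype]; exact Finset.sum_congr rfl fun r _ => hval r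
        _ ≤ ∑ r : Fin K, M * (y ^ K) ^ m / (Nat.factorial m : ℝ) := by
            refine Finset.sum_le_sum fun r _ => ?_
            rw [div_le_div_iff_of_pos_right (by positivity)]
            rw [pow_add, mul_comm m K, pow_mul, mul_comm]
            have hyr : y ^ (r:ℕ) ≤ M := by
              rcases le_or_gt y 1 with h | h
              · exact le_trans (pow_le_one₀ hy h) (le_max_left _ _)
              · exact le_trans (pow_le_pow_right₀ h.le (le_of_lt r.is_lt)) (le_max_right _ _)
            exact mul_le_mul hyr le_rfl (by positivity) (le_trans zero_le_one (le_max_left _ _))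
        _ ≤ (K : ℝ) * M * ((y ^ K) ^ m / (Nat.factorial m : ℝ)) := by
            rw [Finset.sum_const, Finset.card_univ, Fintype.card_fin, nsmul_eq_mul]
            rw [mul_assoc, mul_div_assoc]
    -- compare with g, shifted
  rw [← summable_nat_add_iff K]
  refine ((summable_nat_add_iff K).mpr hg).of_nonneg_of_le (fun n => by
      have : 0 < Real.Gamma (β * (n + K) + 1) :=
        Real.Gamma_pos_of_pos (by positivity)
      positivity) (fun n => ?_)
  have hfac : (Nat.factorial ((n + K) / K) : ℝ) ≤ Real.Gamma (β * (n + K) + 1) := by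
    rw [← Real.Gamma_nat_eq_factorial]
    have h1 : (2:ℝ) ≤ ((n + K) / K : ℕ) + 1 := by
      have : 1 ≤ (n + K) / K := Nat.one_le_div_iff (Nat.pos_of_neZero K) |>.mpr (Nat.le_add_left _ _)
      exact_mod_cast Nat.succ_le_succ this
    have h2 : (((n + K) / K : ℕ) : ℝ) + 1 ≤ β * (n + K) + 1 := by
      have hd : (((n + K) / K : ℕ) : ℝ) ≤ ((n + K : ℕ) : ℝ) / K := by
        rw [le_div_iff₀ (by exact_mod_cast Nat.pos_of_neZero K)]
        exact_mod_cast Nat.div_mul_le_self _ _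
      have : ((n + K : ℕ) : ℝ) / K ≤ β * (n + K) := by
        rw [div_le_iff₀ (by exact_mod_cast Nat.pos_of_neZero K)]
        have : ((n + K : ℕ):ℝ) * 1 ≤ ((n+K:ℕ):ℝ) * (β * K) := by
          apply mul_le_mul_of_nonneg_left hK1 (by positivity)
        push_cast at this ⊢
        nlinarith
      push_cast at hd this ⊢
      linarith
    rcases eq_or_lt_of_le h2 with h | h
    · rw [h]
    · exact le_of_lt (Real.Gamma_strictMonoOn_Ici (by simpa using h1)
        (le_trans h1 h2) h)
  have hpow : y ^ (n + K) / Real.Gamma (β * (n + K) + 1)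
      ≤ y ^ (n + K) / (Nat.factorial ((n + K) / K) : ℝ) := by
    apply div_le_div_of_nonneg_left (pow_nonneg hy _) (by positivity) hfac
  convert hpow using 3 <;> push_cast <;> ring


/-- Power fractional derivative of `f(t) = t - a` with unit weight. -/
theorem pD_linear (a α β p Nα : ℝ) (hα0 : 0 ≤ α) (hα1 : α < 1) (hβ : 0 < β)
    (hp : 0 < p) (hχ : (1 - α) / Nα ≠ 0) (t : ℝ) (ht : a ≤ t) :
    pD a (fun _ => 1) α β p Nα (fun s => s - a) t =
      (Nα / (1 - α)) *
        ∑' n : ℕ, (-(α / (1 - α)) * Real.log p) ^ n * (t - a) ^ (β * n + 1) /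
          Real.Gamma (β * n + 2) := by
  simp only [pD, pE]
  have h1α : (0:ℝ) < 1 - α := by linarith
  set μ : ℝ := α / (1 - α) with hμdef
  have hμ : 0 ≤ μ := div_nonneg hα0 h1α.le
  set L : ℝ := Real.log p with hLdef
  set c : ℕ → ℝ := fun n => (-μ * L) ^ n / Real.Gamma (β * n + 1) with hc
  have hΓpos : ∀ n : ℕ, 0 < Real.Gamma (β * n + 1) :=
    fun n => Real.Gamma_pos_of_pos (by positivity)
  -- derivative of the linear function is 1
  have hderiv : ∀ τ : ℝ, deriv (fun s : ℝ => (1:ℝ) * (s - a)) τ = 1 := by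
    intro τ
    have : (fun s : ℝ => (1:ℝ) * (s - a)) = fun s => s - a := by funext s; ring
    rw [this, deriv_sub_const, deriv_id'']
  -- summable bound
  have hta : (0:ℝ) ≤ t - a := sub_nonneg.mpr ht
  have hbound_sum : Summable (fun n : ℕ => |c n| * (t - a) ^ (β * n)) := by
    refine (summable_ML hβ (y := |(-μ * L)| * (t - a) ^ β)
      (mul_nonneg (abs_nonneg _) (Real.rpow_nonneg hta _))).congr fun n => ?_
    rw [mul_pow, ← Real.rpow_natCast ((t-a) ^ β) n, ← Real.rpow_mul hta]
    rw [hc, abs_div, abs_of_pos (hΓpos n), abs_pow]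
    ring
  -- pointwise term identity on [a, t]
  have hterm : ∀ τ : ℝ, 0 ≤ t - τ → ∀ n : ℕ,
      ((-μ * (t - τ) ^ β) * L) ^ n / Real.Gamma (β * n + 1) = c n * (t - τ) ^ (β * n) := by
    intro τ hτ n
    have h1 : ((t - τ) ^ β) ^ n = (t - τ) ^ (β * n) := by
      rw [← Real.rpow_natCast ((t - τ) ^ β) n, ← Real.rpow_mul hτ]
    rw [hc, show (-μ * (t - τ) ^ β) * L = (-μ * L) * (t - τ) ^ β by ring, mul_pow, h1]
    ring
  -- the dominated convergence hasSum
  have key : HasSum (fun n : ℕ => ∫ τ in Set.Ioc a t, c n * (t - τ) ^ (β * n))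
      (∫ τ in Set.Ioc a t,
        ∑' n : ℕ, ((-μ * (t - τ) ^ β) * L) ^ n / Real.Gamma (β * n + 1)) := by
    apply MeasureTheory.hasSum_integral_of_dominated_convergence
      (bound := fun n _ => |c n| * (t - a) ^ (β * n))
    · intro n
      exact ((continuous_const.mul ((continuous_const.sub continuous_id).rpow_const
        (fun x => Or.inr (by positivity)))).measurable).aestronglyMeasurable
    · intro n
      rw [ae_restrict_iff' measurableSet_Ioc]
      filter_upwards with τ hτ
      rw [norm_mul, Real.norm_eq_abs, Real.norm_eq_abs,
        abs_of_nonneg (Real.rpow_nonneg (by linarith [hτ.2] : (0:ℝ) ≤ t - τ) _)]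
      have h0 : (0:ℝ) ≤ t - τ := by linarith [hτ.2]
      have h1 : t - τ ≤ t - a := by linarith [hτ.1.le]
      gcongr
    · exact Filter.Eventually.of_forall fun _ => hbound_sum
    · exact (integrableOn_const_iff (by finiteness)).mpr (Or.inr measure_Ioc_lt_top)
    · rw [ae_restrict_iff' measurableSet_Ioc]
      filter_upwards with τ hτ
      have hτt : (0:ℝ) ≤ t - τ := by linarith [hτ.2]
      have hsum : Summable (fun n : ℕ => c n * (t - τ) ^ (β * n)) := by
        refine Summable.of_abs (hbound_sum.of_nonneg_of_le (fun n => abs_nonneg _) fun n => ?_)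
        rw [abs_mul, abs_of_nonneg (Real.rpow_nonneg hτt _)]
        have h1 : t - τ ≤ t - a := by linarith [hτ.1.le]
        gcongr
      have := hsum.hasSum
      rwa [show (∑' n : ℕ, c n * (t - τ) ^ (β * n)) =
        ∑' n : ℕ, ((-μ * (t - τ) ^ β) * L) ^ n / Real.Gamma (β * n + 1) from
        tsum_congr fun n => (hterm τ hτt n).symm] at this
  -- compute each integral
  have hInt : ∀ n : ℕ, (∫ τ in Set.Ioc a t, c n * (t - τ) ^ (β * n))
      = c n * ((t - a) ^ (β * n + 1) / (β * n + 1)) := by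
    intro n
    rw [← intervalIntegral.integral_of_le ht, intervalIntegral.integral_const_mul]
    congr 1
    rw [intervalIntegral.integral_comp_sub_left (fun x : ℝ => x ^ (β * (n:ℝ))) t, sub_self,
      integral_rpow (Or.inl (lt_of_lt_of_le neg_one_lt_zero (by positivity))),
      Real.zero_rpow (by positivity : (0:ℝ) < β * n + 1).ne']
    ring
  -- assemble
  rw [intervalIntegral.integral_congr (g := fun τ =>
      ∑' n : ℕ, ((-μ * (t - τ) ^ β) * L) ^ n / Real.Gamma (β * n + 1))
    (fun τ hτ => by rw [hderiv τ, mul_one]),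
    intervalIntegral.integral_of_le ht, ← key.tsum_eq, mul_one, one_div_div]
  congr 1
  refine tsum_congr fun n => ?_
  rw [hInt n, show β * n + 2 = (β * n + 1) + 1 by ring,
    Real.Gamma_add_one (by positivity : (0:ℝ) < β * n + 1).ne']
  simp only [hc]
  rw [div_mul_div_comm, mul_comm (Real.Gamma (β * (n:ℝ) + 1))]
end
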